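/- Let m, p and n be positive integers and let P be a noncrossing partition of {1,…,mpn} all of whose blocks have exactly mp elements. Define P^{(1)} to be the partition of {1,…,pn} whose blocks are obtained from the blocks of P by keeping only the elements of the form mj+1 (with 0 ≤ j ≤ pn−1) and replacing each such element mj+1 by j+1. Then P^{(1)} is a noncrossing partition of {1,…,pn} all of whose blocks have exactly p elements. -/

import Mathlib

/-- A finpartition of a finite set of naturals is noncrossing (planar) if there are no
elements `a < b < c < d` with `a, c` in one block and `b, d` in a different block. -/
def IsNoncrossing {s : Finset ℕ} (P : Finpartition s) : Prop :=
  ∀ a b c d : ℕ, a < b → b < c → c < d →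
    ∀ B₁ ∈ P.parts, ∀ B₂ ∈ P.parts,
      a ∈ B₁ → c ∈ B₁ → b ∈ B₂ → d ∈ B₂ → B₁ = B₂

open Finset in

lemma aux_card_filter_range_mod (m p a r : ℕ) (hm : 0 < m) :
    ((Finset.range (m * p)).filter (fun i => (a + i) % m = r % m)).card = p := by
  set c := (r % m + (m - a % m)) % m with hc
  have hclt : c < m := Nat.mod_lt _ hm
  have hac : (a + c) ≡ r [MOD m] := by
    have e1 : c ≡ r % m + (m - a % m) [MOD m] := Nat.mod_modEq _ m
    have e2 : a + c ≡ a + (r % m + (m - a % m)) [MOD m] := e1.add_left a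
    have e4 : a + (m - a % m) ≡ 0 [MOD m] := by
      have h1 : a % m + (m - a % m) = m := by have := Nat.mod_lt a hm; omega
      calc a + (m - a % m) ≡ a % m + (m - a % m) [MOD m] :=
            (Nat.mod_modEq a m).symm.add_right _
        _ = m := h1
        _ ≡ 0 [MOD m] := Nat.modEq_zero_iff_dvd.mpr dvd_rfl
    calc a + c ≡ a + (r % m + (m - a % m)) [MOD m] := e2
      _ = (a + (m - a % m)) + r % m := by ring
      _ ≡ 0 + r % m [MOD m] := e4.add_right _
      _ = r % m := by ring
      _ ≡ r [MOD m] := Nat.mod_modEq r m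
  have hkey : ∀ i, ((a + i) % m = r % m) ↔ i % m = c := by
    intro i
    constructor
    · intro h
      have h2 : i ≡ c [MOD m] :=
        Nat.ModEq.add_left_cancel' a ((show a + i ≡ r [MOD m] from h).trans hac.symm)
      have := h2
      unfold Nat.ModEq at this
      rwa [Nat.mod_eq_of_lt hclt] at this
    · intro h
      have h2 : i ≡ c [MOD m] := by
        unfold Nat.ModEq; rw [h, Nat.mod_eq_of_lt hclt]
      exact ((h2.add_left a).trans hac)
  have himg : (Finset.range (m * p)).filter (fun i => (a + i) % m = r % m)
      = (Finset.range p).image (fun j => j * m + c) := by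
    ext i
    simp only [mem_filter, mem_range, mem_image, hkey]
    constructor
    · rintro ⟨hilt, hmod⟩
      refine ⟨i / m, ?_, ?_⟩
      · exact Nat.div_lt_of_lt_mul (by omega)
      · have h1 := Nat.div_add_mod i m
        have h2 : i / m * m = m * (i / m) := Nat.mul_comm _ _
        omega
    · rintro ⟨j, hj, rfl⟩
      constructor
      · have h1 : (j + 1) * m ≤ p * m := Nat.mul_le_mul_right m hj
        have h2 : (j + 1) * m = j * m + m := by ring
        have h3 : p * m = m * p := Nat.mul_comm _ _
        omega
      · rw [Nat.add_comm (j * m) c, Nat.add_mul_mod_self_right, Nat.mod_eq_of_lt hclt]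
  rw [himg, Finset.card_image_of_injective _ (fun x y h => Nat.eq_of_mul_eq_mul_right hm (by omega)), Finset.card_range]

open Finset in
lemma aux_card_filter_fin (k : ℕ) (Q : ℕ → Prop) [DecidablePred Q] :
    ((Finset.univ : Finset (Fin k)).filter (fun i => Q i.val)).card
      = ((Finset.range k).filter Q).card := by
  rw [← Nat.Iio_eq_range, ← Fin.map_valEmbedding_univ, Finset.filter_map, Finset.card_map]
  rfl


open Finset in
lemma aux_gap {N mp m : ℕ} (hm : 0 < m) (hdvd : m ∣ mp)
    (P : Finpartition (Finset.Icc 1 N)) (hP : IsNoncrossing P)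
    (hblocks : ∀ B ∈ P.parts, B.card = mp)
    {B : Finset ℕ} (hB : B ∈ P.parts) {u v : ℕ} (hu : u ∈ B) (hv : v ∈ B)
    (huv : u < v) (hcons : ∀ w ∈ B, ¬(u < w ∧ w < v)) : v % m = (u + 1) % m := by
  -- The open interval between u and v is a union of parts.
  set S : Finset ℕ := Finset.Ioo u v with hS
  have hsub : ∀ x ∈ S, ∀ C ∈ P.parts, x ∈ C → C ⊆ S := by
    intro x hx C hC hxC
    have hxS := Finset.mem_Ioo.mp hx
    have hCB : C ≠ B := by
      rintro rfl
      exact hcons x hxC ⟨hxS.1, hxS.2⟩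
    intro y hyC
    by_contra hyS
    rw [Finset.mem_Ioo] at hyS
    push_neg at hyS
    have hyu : y ≠ u := fun h => hCB (P.eq_of_mem_parts hC hB hyC (h ▸ hu))
    have hyv : y ≠ v := fun h => hCB (P.eq_of_mem_parts hC hB hyC (h ▸ hv))
    rcases lt_or_ge y u with hylt | hyge
    · exact hCB (hP y u x v hylt hxS.1 hxS.2 C hC B hB hyC hxC hu hv)
    · have hyv' : v < y := by
        rcases lt_or_ge v y with h | h
        · exact h
        · exfalso; exact absurd (hyS (by omega)) (by omega)
      exact hCB (hP u x v y hxS.1 hxS.2 hyv' B hB C hC hu hv hxC hyC).symm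
  -- S equals the union of the parts contained in it
  have hSeq : S = (P.parts.filter (fun C => C ⊆ S)).biUnion id := by
    ext x
    simp only [Finset.mem_biUnion, Finset.mem_filter, id]
    constructor
    · intro hx
      have hxIcc : x ∈ Finset.Icc 1 N := by
        have huIcc : u ∈ Finset.Icc 1 N := P.le hB hu
        have hvIcc : v ∈ Finset.Icc 1 N := P.le hB hv
        simp only [Finset.mem_Icc] at *
        have := Finset.mem_Ioo.mp hx
        omega
      obtain ⟨C, hC, hxC⟩ := P.exists_mem hxIcc
      exact ⟨C, ⟨hC, hsub x hx C hC hxC⟩, hxC⟩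
    · rintro ⟨C, ⟨_, hCS⟩, hxC⟩
      exact hCS hxC
  have hcard : S.card = (P.parts.filter (fun C => C ⊆ S)).card * mp := by
    have h1 := congrArg Finset.card hSeq
    rw [Finset.card_biUnion (fun C hC D hD hCD =>
      P.disjoint (Finset.mem_filter.mp hC).1 (Finset.mem_filter.mp hD).1 hCD)] at h1
    rw [h1, Finset.sum_congr rfl (fun C hC => by
      simpa using hblocks C (Finset.mem_filter.mp hC).1),
      Finset.sum_const, smul_eq_mul]
  have hScard : S.card = v - u - 1 := Nat.card_Ioo u v
  have : m ∣ v - (u + 1) := by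
    have : m ∣ S.card := hcard ▸ Dvd.dvd.mul_left hdvd _
    rw [hScard] at this
    have h2 : v - u - 1 = v - (u + 1) := by omega
    rwa [h2] at this
  exact ((Nat.modEq_iff_dvd' (by omega)).mpr this).symm

section
variable {N m p : ℕ}
open Finset in
lemma aux_block_card (hm : 0 < m) (hp : 0 < p) (P : Finpartition (Finset.Icc 1 N))
    (hP : IsNoncrossing P) (hblocks : ∀ B ∈ P.parts, B.card = m * p)
    {B : Finset ℕ} (hB : B ∈ P.parts) (r : ℕ) :
    (B.filter (fun x => x % m = r % m)).card = p := by
  set l := B.sort (· ≤ ·) with hl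
  have hlen : l.length = m * p := (Finset.length_sort _).trans (hblocks B hB)
  have hnodup : l.Nodup := B.sort_nodup (· ≤ ·)
  have hsorted : l.Pairwise (· < ·) := B.sortedLT_sort.pairwise
  have hmono : StrictMono l.get := hsorted.sortedLT.strictMono_get
  have hmemB : ∀ i : Fin l.length, l.get i ∈ B := fun i =>
    (Finset.mem_sort (· ≤ ·)).mp (l.get_mem i)
  have hpos : 0 < l.length := by
    rw [hlen]; exact Nat.mul_pos hm hp
  -- consecutive residues
  have hstep : ∀ (i : ℕ) (h : i + 1 < l.length),
      l.get ⟨i + 1, h⟩ % m = (l.get ⟨i, by omega⟩ + 1) % m := by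
    intro i h
    apply aux_gap hm (dvd_mul_right m p) P hP hblocks hB
      (hmemB ⟨i, by omega⟩) (hmemB ⟨i + 1, h⟩)
      (hmono (show (⟨i, by omega⟩ : Fin l.length) < ⟨i + 1, h⟩ by simp))
    intro w hw ⟨h1, h2⟩
    obtain ⟨j, hj⟩ := List.mem_iff_get.mp ((Finset.mem_sort (· ≤ ·)).mpr hw)
    rw [← hj] at h1 h2
    have hj1 : (⟨i, by omega⟩ : Fin l.length) < j := hmono.lt_iff_lt.mp h1
    have hj2 : j < (⟨i + 1, h⟩ : Fin l.length) := hmono.lt_iff_lt.mp h2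
    simp only [Fin.lt_def, Fin.val_mk] at hj1 hj2
    omega
  -- residues along the sorted list
  have hres : ∀ (i : ℕ) (h : i < l.length),
      l.get ⟨i, h⟩ % m = (l.get ⟨0, hpos⟩ + i) % m := by
    intro i
    induction i with
    | zero => intro h; simp
    | succ i ih =>
      intro h
      have hih := ih (by omega)
      calc l.get ⟨i + 1, h⟩ % m = (l.get ⟨i, by omega⟩ + 1) % m := hstep i h
        _ = (l.get ⟨0, hpos⟩ + i + 1) % m := by
            rw [Nat.add_mod, hih, ← Nat.add_mod]
        _ = (l.get ⟨0, hpos⟩ + (i + 1)) % m := by ring_nf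
  set a := l.get ⟨0, hpos⟩ with ha
  have himg : B.filter (fun x => x % m = r % m)
      = ((Finset.univ : Finset (Fin l.length)).filter
          (fun i => (a + i.val) % m = r % m)).image (fun i => l.get i) := by
    ext x
    simp only [Finset.mem_filter, Finset.mem_image, Finset.mem_univ, true_and]
    constructor
    · rintro ⟨hxB, hxq⟩
      obtain ⟨j, hj⟩ := List.mem_iff_get.mp ((Finset.mem_sort (· ≤ ·)).mpr hxB)
      refine ⟨j, ?_, hj⟩
      rw [← (hres j.1 j.2), Fin.eta, hj]
      exact hxq
    · rintro ⟨j, hq, rfl⟩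
      exact ⟨hmemB j, by rw [← Fin.eta j j.2, hres j.1 j.2] at *; exact hq⟩
  rw [himg, Finset.card_image_of_injective _ (List.nodup_iff_injective_get.mp hnodup),
    aux_card_filter_fin l.length (fun i => (a + i) % m = r % m), hlen,
    aux_card_filter_range_mod m p a r hm]

end

open Finset in
/-- Let `P` be a noncrossing partition of `{1,…,mpn}` all of whose blocks have exactly `mp`
elements. The partition `P⁽¹⁾` of `{1,…,pn}`, whose blocks are obtained from those of `P` by
keeping only the elements of the form `mj+1` and sending each such element `mj+1` to `j+1`,
is a noncrossing partition all of whose blocks have exactly `p` elements. -/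
theorem reduced_partition_is_noncrossing_p_partition (m p n : ℕ) (hm : 0 < m) (hp : 0 < p)
    (hn : 0 < n) (P : Finpartition (Finset.Icc 1 (m * p * n)))
    (hP : IsNoncrossing P) (hblocks : ∀ B ∈ P.parts, B.card = m * p) :
    ∃ P₁ : Finpartition (Finset.Icc 1 (p * n)),
      P₁.parts = P.parts.image
        (fun B => (B.filter (fun x => x % m = 1 % m)).image (fun x => (x - 1) / m + 1)) ∧
      IsNoncrossing P₁ ∧ ∀ B ∈ P₁.parts, B.card = p := by
  have hN : m * p * n = m * (p * n) := by ring
  set g : ℕ → ℕ := fun x => (x - 1) / m + 1 with hg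
  set F : Finset ℕ → Finset ℕ := fun B => (B.filter (fun x => x % m = 1 % m)).image g with hF
  -- representation of class elements
  have hrep : ∀ x : ℕ, 1 ≤ x → x % m = 1 % m → m * (g x - 1) + 1 = x := by
    intro x hx hxm
    have hdvd : m ∣ x - 1 := (Nat.modEq_iff_dvd' hx).mp (show (1 : ℕ) ≡ x [MOD m] from hxm.symm)
    have h2 : m * ((x - 1) / m) = x - 1 := Nat.mul_div_cancel' hdvd
    simp only [hg, Nat.add_sub_cancel]
    omega
  -- g is strictly order preserving/reflecting on the class
  have hgLT : ∀ x y : ℕ, 1 ≤ x → 1 ≤ y → x % m = 1 % m → y % m = 1 % m →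
      (g x < g y ↔ x < y) := by
    intro x y hx hy hxm hym
    have h1 := hrep x hx hxm
    have h2 := hrep y hy hym
    have hgx1 : 1 ≤ g x := Nat.le_add_left 1 _
    have hgy1 : 1 ≤ g y := Nat.le_add_left 1 _
    constructor
    · intro h
      have h3 : m * (g x - 1) < m * (g y - 1) :=
        mul_lt_mul_of_pos_left (by omega) hm
      omega
    · intro h
      by_contra hcon
      push_neg at hcon
      have h3 : m * (g y - 1) ≤ m * (g x - 1) := Nat.mul_le_mul_left m (by omega)
      omega
  -- g is injective on the class
  have hginj : ∀ x y : ℕ, 1 ≤ x → 1 ≤ y → x % m = 1 % m → y % m = 1 % m →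
      g x = g y → x = y := by
    intro x y hx hy hxm hym hgxy
    have h1 := hrep x hx hxm
    have h2 := hrep y hy hym
    rw [hgxy] at h1
    omega
  have hmemN : ∀ B ∈ P.parts, ∀ x ∈ B, 1 ≤ x ∧ x ≤ m * p * n := by
    intro B hB x hx
    have := P.le hB hx
    simpa using this
  -- each F B has cardinality p
  have hcardF : ∀ B ∈ P.parts, (F B).card = p := by
    intro B hB
    rw [hF]
    rw [Finset.card_image_of_injOn]
    · exact aux_block_card hm hp P hP hblocks hB 1
    · intro x hx y hy hxy
      simp only [Finset.mem_coe, Finset.mem_filter] at hx hy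
      exact hginj x y (hmemN B hB x hx.1).1 (hmemN B hB y hy.1).1 hx.2 hy.2 hxy
  -- F B lands in Icc 1 (p*n)
  have hrange : ∀ B ∈ P.parts, F B ⊆ Finset.Icc 1 (p * n) := by
    intro B hB y hy
    simp only [hF, Finset.mem_image, Finset.mem_filter] at hy
    obtain ⟨x, ⟨hxB, hxm⟩, rfl⟩ := hy
    obtain ⟨hx1, hxN⟩ := hmemN B hB x hxB
    have h1 := hrep x hx1 hxm
    simp only [Finset.mem_Icc]
    constructor
    · simp [hg]
    · by_contra hcon
      push_neg at hcon
      have h4 : m * (p * n) ≤ m * (g x - 1) := Nat.mul_le_mul_left m (by omega)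
      omega
  -- surjectivity onto Icc 1 (p*n)
  have hsurj : ∀ j ∈ Finset.Icc 1 (p * n), ∃ B ∈ P.parts, j ∈ F B := by
    intro j hj
    simp only [Finset.mem_Icc] at hj
    set x := m * (j - 1) + 1 with hx
    have hxIcc : x ∈ Finset.Icc 1 (m * p * n) := by
      simp only [Finset.mem_Icc]
      constructor
      · omega
      · have : m * (j - 1) + 1 ≤ m * (p * n - 1) + 1 :=
          by have := Nat.mul_le_mul_left m (show j - 1 ≤ p * n - 1 by omega); omega
        have h2 : m * (p * n - 1) + m = m * (p * n) := by
          rw [← Nat.mul_succ]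
          congr 1
          omega
        omega
    obtain ⟨B, hB, hxB⟩ := P.exists_mem hxIcc
    refine ⟨B, hB, ?_⟩
    simp only [hF, Finset.mem_image, Finset.mem_filter]
    refine ⟨x, ⟨hxB, ?_⟩, ?_⟩
    · simp only [hx]
      rw [Nat.add_comm, Nat.add_mul_mod_self_left]
    · simp only [hg, hx]
      rw [Nat.add_sub_cancel, Nat.mul_div_cancel_left _ hm]
      omega
  -- disjointness of images
  have hdisj : ∀ B₁ ∈ P.parts, ∀ B₂ ∈ P.parts, B₁ ≠ B₂ → Disjoint (F B₁) (F B₂) := by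
    intro B₁ hB₁ B₂ hB₂ hne
    rw [Finset.disjoint_left]
    intro y hy₁ hy₂
    simp only [hF, Finset.mem_image, Finset.mem_filter] at hy₁ hy₂
    obtain ⟨x₁, ⟨hx₁B, hx₁m⟩, hgx₁⟩ := hy₁
    obtain ⟨x₂, ⟨hx₂B, hx₂m⟩, hgx₂⟩ := hy₂
    have hx12 : x₁ = x₂ := hginj x₁ x₂ (hmemN B₁ hB₁ x₁ hx₁B).1 (hmemN B₂ hB₂ x₂ hx₂B).1
      hx₁m hx₂m (hgx₁.trans hgx₂.symm)
    exact hne (P.eq_of_mem_parts hB₁ hB₂ hx₁B (hx12 ▸ hx₂B))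
  -- build the partition
  refine ⟨⟨P.parts.image F, ?_, ?_, ?_⟩, rfl, ?_, ?_⟩
  · -- supIndep
    rw [Finset.supIndep_iff_pairwiseDisjoint]
    intro C₁ hC₁ C₂ hC₂ hne
    simp only [Finset.coe_image, Set.mem_image, Finset.mem_coe] at hC₁ hC₂
    obtain ⟨B₁, hB₁, rfl⟩ := hC₁
    obtain ⟨B₂, hB₂, rfl⟩ := hC₂
    exact hdisj B₁ hB₁ B₂ hB₂ (fun h => hne (by rw [h]))
  · -- sup
    apply le_antisymm
    · apply Finset.sup_le
      intro C hC
      obtain ⟨B, hB, rfl⟩ := Finset.mem_image.mp hC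
      exact hrange B hB
    · intro j hj
      rw [Finset.mem_sup]
      obtain ⟨B, hB, hjB⟩ := hsurj j hj
      exact ⟨F B, Finset.mem_image_of_mem F hB, hjB⟩
  · -- not bot
    intro hbot
    obtain ⟨B, hB, hFB⟩ := Finset.mem_image.mp hbot
    have := hcardF B hB
    rw [hFB] at this
    simp at this
    omega
  · -- noncrossing
    intro a b c d hab hbc hcd C₁ hC₁ C₂ hC₂ haC₁ hcC₁ hbC₂ hdC₂
    obtain ⟨B₁, hB₁, rfl⟩ := Finset.mem_image.mp hC₁
    obtain ⟨B₂, hB₂, rfl⟩ := Finset.mem_image.mp hC₂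
    simp only [hF, Finset.mem_image, Finset.mem_filter] at haC₁ hcC₁ hbC₂ hdC₂
    obtain ⟨xa, ⟨hxaB, hxam⟩, rfl⟩ := haC₁
    obtain ⟨xc, ⟨hxcB, hxcm⟩, rfl⟩ := hcC₁
    obtain ⟨xb, ⟨hxbB, hxbm⟩, rfl⟩ := hbC₂
    obtain ⟨xd, ⟨hxdB, hxdm⟩, rfl⟩ := hdC₂
    have h1a := (hmemN B₁ hB₁ xa hxaB).1
    have h1c := (hmemN B₁ hB₁ xc hxcB).1
    have h1b := (hmemN B₂ hB₂ xb hxbB).1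
    have h1d := (hmemN B₂ hB₂ xd hxdB).1
    have hab' : xa < xb := (hgLT xa xb h1a h1b hxam hxbm).mp hab
    have hbc' : xb < xc := (hgLT xb xc h1b h1c hxbm hxcm).mp hbc
    have hcd' : xc < xd := (hgLT xc xd h1c h1d hxcm hxdm).mp hcd
    rw [hP xa xb xc xd hab' hbc' hcd' B₁ hB₁ B₂ hB₂ hxaB hxcB hxbB hxdB]
  · -- block sizes
    intro C hC
    obtain ⟨B, hB, rfl⟩ := Finset.mem_image.mp hC
    exact hcardF B hB
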